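/- For g ≥ 2, under the genericity assumptions, the point B = (C_g, C_{−1} − C_{g−1} − (g−1)C_g) satisfies (g+1)C_g < C_{−1} − C_{g−1} − (g−1)C_g < C_{−1} − (g+1)C_g; in particular B lies in the interior of the vertical edge of Γ̃ joining V_0′ = (C_g, (g+1)C_g) and V_0 = (C_g, C_{−1} − (g+1)C_g), and F is not differentiable at B. -/

import Mathlib

/-- The tropical polynomial
`F(X,Y) = min(2Y, Y + min((g+1)X, C_g + gX, …, C_1 + X, C_0), C_{-1})`. -/
noncomputable def tropF (g : ℕ) (Cm1 : ℝ) (C : ℕ → ℝ) (P : ℝ × ℝ) : ℝ :=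
  min (2 * P.2)
    (min
      (P.2 + min (((g : ℝ) + 1) * P.1)
        ((Finset.range (g + 1)).inf' ⟨0, Finset.mem_range.mpr (Nat.succ_pos g)⟩
          (fun i => C i + (i : ℝ) * P.1)))
      Cm1)

/-- For `g ≥ 2`, under the genericity assumptions, the point
`B = (C_g, C_{-1} - C_{g-1} - (g-1)C_g)` lies in the interior of the vertical
edge of `Γ̃` joining `V_0' = (C_g, (g+1)C_g)` and `V_0 = (C_g, C_{-1} - (g+1)C_g)`,
and `F` is not differentiable at `B`. -/
theorem tropF_point_B (g : ℕ) (hg : 2 ≤ g) (Cm1 : ℝ) (C : ℕ → ℝ)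
    (h1 : Cm1 > 2 * C 0) (h2 : C (g - 1) > 2 * C g)
    (h3 : ∀ i, i + 2 ≤ g → C i + C (i + 2) > 2 * C (i + 1)) :
    ((g : ℝ) + 1) * C g < Cm1 - C (g - 1) - ((g : ℝ) - 1) * C g ∧
    Cm1 - C (g - 1) - ((g : ℝ) - 1) * C g < Cm1 - ((g : ℝ) + 1) * C g ∧
    ¬ DifferentiableAt ℝ (tropF g Cm1 C)
        (C g, Cm1 - C (g - 1) - ((g : ℝ) - 1) * C g) := by
  have hg1 : 1 ≤ g := by omega
  -- consecutive differences exceed C g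
  have Q : ∀ k, k + 1 ≤ g → C g < C (g - 1 - k) - C (g - k) := by
    intro k
    induction k with
    | zero =>
      intro _
      simpa using by linarith [h2]
    | succ k ih =>
      intro hk
      have e1 : g - 1 - (k + 1) = g - 2 - k := by omega
      have e2 : g - (k + 1) = g - 1 - k := by omega
      rw [e1, e2]
      have h3' := h3 (g - 2 - k) (by omega)
      have e3 : g - 2 - k + 2 = g - k := by omega
      have e4 : g - 2 - k + 1 = g - 1 - k := by omega
      rw [e3, e4] at h3'
      have := ih (by omega)
      linarith
  -- cumulative bound
  have M : ∀ k, k + 1 ≤ g → C (g - 1) + (k : ℝ) * C g ≤ C (g - 1 - k) := by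
    intro k
    induction k with
    | zero => intro _; simp
    | succ k ih =>
      intro hk
      have hQ := Q (k + 1) hk
      have e2 : g - (k + 1) = g - 1 - k := by omega
      rw [e2] at hQ
      have := ih (by omega)
      push_cast
      linarith
  have hF0 : ∀ i, i < g → C (g - 1) + ((g : ℝ) - 1 - i) * C g ≤ C i := by
    intro i hi
    have h := M (g - 1 - i) (by omega)
    have e1 : g - 1 - (g - 1 - i) = i := by omega
    rw [e1] at h
    have hc : ((g - 1 - i : ℕ) : ℝ) = (g : ℝ) - 1 - i := by
      have : g - 1 - i = g - (1 + i) := by omega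
      rw [this, Nat.cast_sub (by omega)]
      push_cast; ring
    rw [hc] at h
    exact h
  have hF0' : ∀ i, i < g → ((g : ℝ) + 1 - i) * C g < C i := by
    intro i hi
    have := hF0 i hi
    nlinarith [hF0 i hi]
  set x := C g with hx
  set y := Cm1 - C (g - 1) - ((g : ℝ) - 1) * C g with hy
  have hC0 : ((g : ℝ) + 1) * x < C 0 := by
    have := hF0' 0 (by omega)
    simpa using this
  have hC0' : C (g - 1) + ((g : ℝ) - 1) * x ≤ C 0 := by
    have := hF0 0 (by omega)
    simpa using this
  have ineqA : ((g : ℝ) + 1) * x < y := by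
    rw [hy]; linarith
  have ineqB : y < Cm1 - ((g : ℝ) + 1) * x := by
    rw [hy]; linarith
  refine ⟨ineqA, ineqB, ?_⟩
  intro hd
  -- restrict along the horizontal line through B
  have hφ : DifferentiableAt ℝ (fun t : ℝ => tropF g Cm1 C (x + t, y)) 0 := by
    have hmap : DifferentiableAt ℝ (fun t : ℝ => ((x + t, y) : ℝ × ℝ)) 0 :=
      (((differentiableAt_const x).add differentiableAt_id : DifferentiableAt ℝ (fun t : ℝ => x + t) 0)).prodMk (differentiableAt_const y)
    have : DifferentiableAt ℝ (tropF g Cm1 C) ((fun t : ℝ => ((x + t, y) : ℝ × ℝ)) 0) := by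
      simpa using hd
    exact this.comp 0 hmap
  -- the explicit local form
  set w : ℝ → ℝ := fun t => y + (((g : ℝ) + 1) * x + (g : ℝ) * t + min t 0) with hw
  have hwc : Continuous w := by
    apply continuous_const.add
    exact (continuous_const.add (continuous_const.mul continuous_id)).add
      (continuous_id.min continuous_const)
  have hne : (Finset.range g).Nonempty := ⟨0, Finset.mem_range.mpr (by omega)⟩
  -- eventually, each term with i < g exceeds the g-term
  have E1 : ∀ᶠ t : ℝ in nhds 0, ∀ i ∈ Finset.range g,
      C g + (g : ℝ) * (x + t) < C i + (i : ℝ) * (x + t) := by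
    rw [Filter.eventually_all_finset]
    intro i hi
    have hi' : i < g := Finset.mem_range.mp hi
    have hlt : C g + (g : ℝ) * (x + 0) < C i + (i : ℝ) * (x + 0) := by
      have := hF0' i hi'
      simp only [add_zero]
      nlinarith
    exact ContinuousAt.eventually_lt
      ((continuous_const.add (continuous_const.mul (continuous_const.add continuous_id))).continuousAt)
      ((continuous_const.add (continuous_const.mul (continuous_const.add continuous_id))).continuousAt)
      hlt
  have E2 : ∀ᶠ t : ℝ in nhds 0, w t < 2 * y :=
    ContinuousAt.eventually_lt hwc.continuousAt continuous_const.continuousAt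
      (by simp [hw]; linarith)
  have E3 : ∀ᶠ t : ℝ in nhds 0, w t < Cm1 :=
    ContinuousAt.eventually_lt hwc.continuousAt continuous_const.continuousAt
      (by simp [hw, hy]; linarith)
  have hev : (fun t : ℝ => tropF g Cm1 C (x + t, y)) =ᶠ[nhds 0] w := by
    filter_upwards [E1, E2, E3] with t h1t h2t h3t
    have hinf : (Finset.range (g + 1)).inf' ⟨0, Finset.mem_range.mpr (Nat.succ_pos g)⟩
        (fun i => C i + (i : ℝ) * (x + t)) = C g + (g : ℝ) * (x + t) := by
      refine le_antisymm (Finset.inf'_le _ (Finset.mem_range.mpr (Nat.lt_succ_self g))) ?_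
      refine Finset.le_inf' _ _ ?_
      intro i hi
      rcases Nat.lt_succ_iff_lt_or_eq.mp (Finset.mem_range.mp hi) with hlt | heq
      · exact le_of_lt (h1t i (Finset.mem_range.mpr hlt))
      · subst heq; exact le_refl _
    have hmin : min (((g : ℝ) + 1) * (x + t)) (C g + (g : ℝ) * (x + t))
        = ((g : ℝ) + 1) * x + (g : ℝ) * t + min t 0 := by
      rcases le_total t 0 with ht | ht
      · rw [min_eq_left (by nlinarith), min_eq_left ht]; ring
      · rw [min_eq_right (by nlinarith), min_eq_right ht]; ring
    simp only [tropF, hinf, hmin]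
    have : min (2 * y) (min (w t) Cm1) = w t := by
      rw [min_eq_left h3t.le, min_eq_right h2t.le]
    exact this
  have hwd : DifferentiableAt ℝ w 0 := hφ.congr_of_eventuallyEq hev.symm
  have habs : DifferentiableAt ℝ (abs : ℝ → ℝ) 0 := by
    have heq : (abs : ℝ → ℝ) = fun t => t - 2 * (w t - (y + ((g : ℝ) + 1) * x + (g : ℝ) * t)) := by
      funext t
      simp only [hw]
      rcases le_total t 0 with ht | ht
      · rw [abs_of_nonpos ht, min_eq_left ht]; ring
      · rw [abs_of_nonneg ht, min_eq_right ht]; ring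
    rw [heq]
    exact differentiableAt_id.sub
      ((hwd.sub (((differentiableAt_const _).add
        ((differentiableAt_const _).mul differentiableAt_id)))).const_mul 2)
  exact not_differentiableAt_abs_zero habs
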